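/- arXiv:1210.2845 — 7 statements merged into one kernel-verified Lean document; each statement's English description precedes it below -/
import Mathlib

section
/- (Sufficiency of the KKT conditions.) Let ρ_1,…,ρ_N be density matrices on ℂ^d with prior probabilities q_x ≥ 0, Σ_x q_x = 1. Suppose there exist a Hermitian d×d matrix K, positive semidefinite matrices S_1,…,S_N with K = q_x ρ_x + S_x for every x, and an N-outcome POVM (M_x)_{x=1}^N with tr(S_x M_x) = 0 for every x. Then (M_x) is an optimal measurement: for every N-outcome POVM (N_x)_{x=1}^N one has Σ_x q_x tr(N_x ρ_x) ≤ Σ_x q_x tr(M_x ρ_x) = tr(K); hence the guessing probability equals tr(K). -/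
open BigOperators Matrix
open scoped ComplexOrder

/-- A density matrix: positive semidefinite with trace 1. -/
def IsDensityMatrix {d : ℕ} (ρ : Matrix (Fin d) (Fin d) ℂ) : Prop :=
  ρ.PosSemidef ∧ ρ.trace = 1

/-- An N-outcome POVM: positive semidefinite elements summing to the identity. -/
def IsPOVM {d N : ℕ} (M : Fin N → Matrix (Fin d) (Fin d) ℂ) : Prop :=
  (∀ x, (M x).PosSemidef) ∧ ∑ x, M x = 1

lemma psd_trace_nonneg {d : ℕ} {A : Matrix (Fin d) (Fin d) ℂ} (hA : A.PosSemidef) :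
    0 ≤ A.trace := by
  rw [Matrix.trace]
  apply Finset.sum_nonneg
  intro i _
  exact hA.diag_nonneg

open scoped MatrixOrder in
lemma psd_trace_mul_nonneg {d : ℕ} {A B : Matrix (Fin d) (Fin d) ℂ}
    (hA : A.PosSemidef) (hB : B.PosSemidef) : 0 ≤ (A * B).trace := by
  have h1 : A * B = CFC.sqrt A * CFC.sqrt A * B := by rw [CFC.sqrt_mul_sqrt_self A hA.nonneg]
  have h2 : (A * B).trace = (CFC.sqrt A * B * CFC.sqrt A).trace := by
    rw [h1, mul_assoc, Matrix.trace_mul_comm]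
  rw [h2]
  have := hB.conjTranspose_mul_mul_same (CFC.sqrt A)
  rw [(CFC.sqrt_nonneg A).posSemidef.1] at this
  exact psd_trace_nonneg this

/-- sufficiency of the KKT conditions: if `K = q_x ρ_x + S_x` with
`S_x ⪰ 0` and `(M_x)` is a POVM with `tr(S_x M_x) = 0` for every `x`, then `(M_x)` is
optimal: every POVM `(N_x)` satisfies `Σ_x q_x tr(N_x ρ_x) ≤ Σ_x q_x tr(M_x ρ_x) = tr K`. -/
theorem kkt_sufficient_for_optimality
    (d N : ℕ) (ρ : Fin N → Matrix (Fin d) (Fin d) ℂ)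
    (hρ : ∀ x, IsDensityMatrix (ρ x))
    (q : Fin N → ℝ) (hq : ∀ x, 0 ≤ q x) (hq1 : ∑ x, q x = 1)
    (K : Matrix (Fin d) (Fin d) ℂ) (hK : K.IsHermitian)
    (S : Fin N → Matrix (Fin d) (Fin d) ℂ) (hS : ∀ x, (S x).PosSemidef)
    (hKS : ∀ x, K = (q x : ℂ) • ρ x + S x)
    (M : Fin N → Matrix (Fin d) (Fin d) ℂ) (hM : IsPOVM M)
    (horth : ∀ x, ((S x) * (M x)).trace = 0) :
    (∀ Nx : Fin N → Matrix (Fin d) (Fin d) ℂ, IsPOVM Nx →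
      ∑ x, q x * ((Nx x * ρ x).trace).re ≤ ∑ x, q x * ((M x * ρ x).trace).re) ∧
    ∑ x, q x * ((M x * ρ x).trace).re = (K.trace).re := by
  have key : ∀ Nx : Fin N → Matrix (Fin d) (Fin d) ℂ, IsPOVM Nx →
      ∑ x, q x * ((Nx x * ρ x).trace).re
        = (K.trace).re - ∑ x, ((S x * Nx x).trace).re := by
    intro Nx hNx
    have hC : ∑ x, (q x : ℂ) * (Nx x * ρ x).trace
        = K.trace - ∑ x, (S x * Nx x).trace := by
      have h1 : ∀ x, (q x : ℂ) * (Nx x * ρ x).trace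
          = (Nx x * K).trace - (S x * Nx x).trace := by
        intro x
        rw [hKS x, Matrix.mul_add, Matrix.trace_add, Matrix.mul_smul,
          Matrix.trace_smul, Matrix.trace_mul_comm (S x) (Nx x), smul_eq_mul]
        ring
      rw [Finset.sum_congr rfl (fun x _ => h1 x), Finset.sum_sub_distrib,
        ← Matrix.trace_sum, ← Finset.sum_mul, hNx.2, Matrix.one_mul]
    have := congrArg Complex.re hC
    simpa [Complex.re_sum, Complex.sub_re] using this
  have hzero : ∑ x, ((S x * M x).trace).re = 0 := by
    simp [horth]
  constructor
  · intro Nx hNx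
    rw [key Nx hNx, key M hM, hzero]
    have : 0 ≤ ∑ x, ((S x * Nx x).trace).re := by
      apply Finset.sum_nonneg
      intro x _
      have := psd_trace_mul_nonneg (hS x) (hNx.1 x)
      exact (Complex.le_def.mp this).1
    linarith
  · rw [key M hM, hzero]; ring
end

section
/- Let ρ_1,…,ρ_N be density matrices on ℂ^d with prior probabilities q_x ≥ 0, Σ_x q_x = 1. Suppose K is a Hermitian d×d matrix and S_1,…,S_N are positive semidefinite matrices with K = q_x ρ_x + S_x for every x, and (M_x)_{x=1}^N is an N-outcome POVM achieving tr(K), i.e. Σ_x q_x tr(M_x ρ_x) = tr(K). Then S_x M_x = 0 for every x, and K = Σ_x q_x ρ_x M_x. -/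
open BigOperators Matrix
open scoped ComplexOrder

lemma aux_trace_conjTranspose_mul_self (d : ℕ) (C : Matrix (Fin d) (Fin d) ℂ) :
    (Cᴴ * C).trace = ((∑ j, ∑ i, Complex.normSq (C i j) : ℝ) : ℂ) := by
  simp only [Matrix.trace, Matrix.diag, Matrix.mul_apply, Matrix.conjTranspose_apply]
  push_cast
  refine Finset.sum_congr rfl fun j _ => Finset.sum_congr rfl fun i _ => ?_
  simp [Complex.normSq_eq_conj_mul_self]

lemma aux_eq_zero_of_trace (d : ℕ) (C : Matrix (Fin d) (Fin d) ℂ)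
    (h : ((Cᴴ * C).trace).re = 0) : C = 0 := by
  rw [aux_trace_conjTranspose_mul_self, Complex.ofReal_re] at h
  ext i j
  have h1 : ∀ j ∈ Finset.univ, (0:ℝ) ≤ ∑ i, Complex.normSq (C i j) :=
    fun j _ => Finset.sum_nonneg fun i _ => Complex.normSq_nonneg _
  have h2 := (Finset.sum_eq_zero_iff_of_nonneg h1).mp h j (Finset.mem_univ j)
  have h3 := (Finset.sum_eq_zero_iff_of_nonneg
    (fun i _ => Complex.normSq_nonneg (C i j))).mp h2 i (Finset.mem_univ i)
  simpa using Complex.normSq_eq_zero.mp h3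

open scoped MatrixOrder in
lemma aux_psd_mul_sqrt_trace (d : ℕ) (A B : Matrix (Fin d) (Fin d) ℂ)
    (hA : A.PosSemidef) (hB : B.PosSemidef) :
    ∃ C : Matrix (Fin d) (Fin d) ℂ, (Cᴴ * C).trace = (A * B).trace ∧
      (C = 0 → A * B = 0) := by
  refine ⟨(CFC.sqrt B) * (CFC.sqrt A), ?_, ?_⟩
  · have e1 : ((CFC.sqrt B) * (CFC.sqrt A))ᴴ * ((CFC.sqrt B) * (CFC.sqrt A))
        = (CFC.sqrt A) * (((CFC.sqrt B) * (CFC.sqrt B)) * (CFC.sqrt A)) := by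
      rw [conjTranspose_mul, (CFC.sqrt_nonneg B).posSemidef.1, (CFC.sqrt_nonneg A).posSemidef.1]
      noncomm_ring
    rw [e1, CFC.sqrt_mul_sqrt_self B hB.nonneg, Matrix.trace_mul_comm, Matrix.mul_assoc,
      CFC.sqrt_mul_sqrt_self A hA.nonneg, Matrix.trace_mul_comm]
  · intro hC
    have hBA : B * A = ((CFC.sqrt B) * (CFC.sqrt B)) * ((CFC.sqrt A) * (CFC.sqrt A)) := by
      rw [CFC.sqrt_mul_sqrt_self B hB.nonneg, CFC.sqrt_mul_sqrt_self A hA.nonneg]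
    have hBA0 : B * A = 0 := by
      rw [hBA, Matrix.mul_assoc, ← Matrix.mul_assoc (CFC.sqrt B) (CFC.sqrt A), hC]
      simp [Matrix.mul_assoc]
    calc A * B = (Bᴴ * Aᴴ)ᴴ := by simp
      _ = 0 := by rw [hB.1, hA.1, hBA0]; simp

lemma aux_trace_psd_mul (d : ℕ) (A B : Matrix (Fin d) (Fin d) ℂ)
    (hA : A.PosSemidef) (hB : B.PosSemidef) :
    0 ≤ ((A * B).trace).re ∧ (((A * B).trace).re = 0 → A * B = 0) := by
  obtain ⟨C, hCt, hC0⟩ := aux_psd_mul_sqrt_trace d A B hA hB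
  constructor
  · rw [← hCt, aux_trace_conjTranspose_mul_self, Complex.ofReal_re]
    exact Finset.sum_nonneg fun j _ => Finset.sum_nonneg fun i _ => Complex.normSq_nonneg _
  · intro h
    exact hC0 (aux_eq_zero_of_trace d C (by rw [hCt]; exact h))

/-- if `K = q_x ρ_x + S_x` with `S_x ⪰ 0` and the POVM `(M_x)` achieves
`Σ_x q_x tr(M_x ρ_x) = tr K`, then `S_x M_x = 0` for every `x` and
`K = Σ_x q_x ρ_x M_x`. -/
theorem achieving_povm_orthogonality
    (d N : ℕ) (ρ : Fin N → Matrix (Fin d) (Fin d) ℂ)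
    (hρ : ∀ x, IsDensityMatrix (ρ x))
    (q : Fin N → ℝ) (hq : ∀ x, 0 ≤ q x) (hq1 : ∑ x, q x = 1)
    (K : Matrix (Fin d) (Fin d) ℂ) (hK : K.IsHermitian)
    (S : Fin N → Matrix (Fin d) (Fin d) ℂ) (hS : ∀ x, (S x).PosSemidef)
    (hKS : ∀ x, K = (q x : ℂ) • ρ x + S x)
    (M : Fin N → Matrix (Fin d) (Fin d) ℂ) (hM : IsPOVM M)
    (hach : ∑ x, q x * ((M x * ρ x).trace).re = (K.trace).re) :
    (∀ x, S x * M x = 0) ∧ K = ∑ x, (q x : ℂ) • (ρ x * M x) := by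
  obtain ⟨hM1, hM2⟩ := hM
  have hKtr : K.trace = ∑ x, ((q x : ℂ) * (ρ x * M x).trace + (S x * M x).trace) := by
    calc K.trace = (K * ∑ x, M x).trace := by rw [hM2, Matrix.mul_one]
      _ = ∑ x, (K * M x).trace := by rw [Finset.mul_sum, Matrix.trace_sum]
      _ = _ := by
          refine Finset.sum_congr rfl fun x _ => ?_
          rw [hKS x, Matrix.add_mul, Matrix.trace_add, Matrix.smul_mul, Matrix.trace_smul,
            smul_eq_mul]
  have hre : (K.trace).re
      = ∑ x, (q x * ((M x * ρ x).trace).re + ((S x * M x).trace).re) := by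
    rw [hKtr, Complex.re_sum]
    refine Finset.sum_congr rfl fun x _ => ?_
    rw [Complex.add_re, Complex.mul_re, Matrix.trace_mul_comm (ρ x)]
    simp
  have hSsum : ∑ x, ((S x * M x).trace).re = 0 := by
    have h := hre
    rw [Finset.sum_add_distrib, ← hach] at h
    linarith
  have hSM : ∀ x, S x * M x = 0 := by
    intro x
    have hnn : ∀ y ∈ Finset.univ, (0:ℝ) ≤ ((S y * M y).trace).re :=
      fun y _ => (aux_trace_psd_mul d (S y) (M y) (hS y) (hM1 y)).1
    have h0 := (Finset.sum_eq_zero_iff_of_nonneg hnn).mp hSsum x (Finset.mem_univ x)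
    exact (aux_trace_psd_mul d (S x) (M x) (hS x) (hM1 x)).2 h0
  refine ⟨hSM, ?_⟩
  calc K = K * ∑ x, M x := by rw [hM2, Matrix.mul_one]
    _ = ∑ x, K * M x := by rw [Finset.mul_sum]
    _ = ∑ x, (q x : ℂ) • (ρ x * M x) := by
        refine Finset.sum_congr rfl fun x _ => ?_
        rw [hKS x, Matrix.add_mul, hSM x, add_zero, Matrix.smul_mul]
end

section
/- (The KKT conditions imply the Holevo–Yuen optimality conditions.) Let ρ_1,…,ρ_N be density matrices on ℂ^d with prior probabilities q_x ≥ 0, Σ_x q_x = 1. Suppose there exist a Hermitian d×d matrix K and positive semidefinite matrices S_1,…,S_N with K = q_x ρ_x + S_x for every x, and an N-outcome POVM (M_x)_{x=1}^N with tr(S_x M_x) = 0 for every x. Then: (i) M_x (q_x ρ_x − q_y ρ_y) M_y = 0 for all x, y ∈ {1,…,N}; and (ii) Σ_x q_x ρ_x M_x − q_y ρ_y is positive semidefinite for every y. -/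
open BigOperators Matrix
open scoped ComplexOrder

lemma aux_X_zero {d : ℕ} (X : Matrix (Fin d) (Fin d) ℂ)
    (h : (Xᴴ * X).trace = 0) : X = 0 := by
  ext i j
  have h1 : ∀ k ∈ Finset.univ, (0:ℂ) ≤ (Xᴴ * X) k k := fun k _ => by
    simpa [Matrix.mul_apply] using Finset.sum_nonneg fun l _ => star_mul_self_nonneg (X l k)
  have h2 := (Finset.sum_eq_zero_iff_of_nonneg h1).mp h j (Finset.mem_univ j)
  rw [Matrix.mul_apply] at h2
  have h3 : ∀ k ∈ Finset.univ, (0:ℂ) ≤ Xᴴ j k * X k j := fun k _ => by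
    simpa using star_mul_self_nonneg (X k j)
  have h4 := (Finset.sum_eq_zero_iff_of_nonneg h3).mp h2 i (Finset.mem_univ i)
  simp only [Matrix.conjTranspose_apply, Complex.star_def] at h4
  rw [mul_comm, Complex.mul_conj] at h4
  have : Complex.normSq (X i j) = 0 := by exact_mod_cast h4
  simpa using Complex.normSq_eq_zero.mp this

open scoped MatrixOrder in
lemma aux_psd_trace_mul_zero {d : ℕ} {A B : Matrix (Fin d) (Fin d) ℂ}
    (hA : A.PosSemidef) (hB : B.PosSemidef) (h : (A * B).trace = 0) :
    A * B = 0 := by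
  set a := CFC.sqrt A with ha
  set b := CFC.sqrt B with hb
  have haH : aᴴ = a := (CFC.sqrt_nonneg A).posSemidef.1
  have hbH : bᴴ = b := (CFC.sqrt_nonneg B).posSemidef.1
  have e1 : (b * a)ᴴ * (b * a) = a * (B * a) := by
    rw [conjTranspose_mul, haH, hbH, ← CFC.sqrt_mul_sqrt_self B hB.nonneg]
    simp only [Matrix.mul_assoc]; rfl
  have hX : ((b * a)ᴴ * (b * a)).trace = 0 := by
    rw [e1, Matrix.trace_mul_comm, Matrix.mul_assoc, CFC.sqrt_mul_sqrt_self A hA.nonneg,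
      Matrix.trace_mul_comm]
    exact h
  have hba : b * a = 0 := aux_X_zero _ hX
  have hab : a * b = 0 := by
    have : (b * a)ᴴ = 0 := by rw [hba]; simp
    rwa [conjTranspose_mul, haH, hbH] at this
  have : A * B = a * (a * b) * b := by
    rw [← CFC.sqrt_mul_sqrt_self A hA.nonneg, ← CFC.sqrt_mul_sqrt_self B hB.nonneg]
    simp only [Matrix.mul_assoc]; rfl
  rw [this, hab]
  simp

/-- KKT ⟹ Holevo–Yuen conditions: if `K = q_x ρ_x + S_x` with `S_x ⪰ 0`
and `(M_x)` is a POVM with `tr(S_x M_x) = 0` for all `x`, then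
(i) `M_x (q_x ρ_x − q_y ρ_y) M_y = 0` for all `x, y`, and
(ii) `Σ_x q_x ρ_x M_x − q_y ρ_y ⪰ 0` for all `y`. -/
theorem kkt_implies_holevo_yuen
    (d N : ℕ) (ρ : Fin N → Matrix (Fin d) (Fin d) ℂ)
    (hρ : ∀ x, IsDensityMatrix (ρ x))
    (q : Fin N → ℝ) (hq : ∀ x, 0 ≤ q x) (hq1 : ∑ x, q x = 1)
    (K : Matrix (Fin d) (Fin d) ℂ) (hK : K.IsHermitian)
    (S : Fin N → Matrix (Fin d) (Fin d) ℂ) (hS : ∀ x, (S x).PosSemidef)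
    (hKS : ∀ x, K = (q x : ℂ) • ρ x + S x)
    (M : Fin N → Matrix (Fin d) (Fin d) ℂ) (hM : IsPOVM M)
    (horth : ∀ x, ((S x) * (M x)).trace = 0) :
    (∀ x y, M x * ((q x : ℂ) • ρ x - (q y : ℂ) • ρ y) * M y = 0) ∧
    (∀ y, ((∑ x, (q x : ℂ) • (ρ x * M x)) - (q y : ℂ) • ρ y).PosSemidef) := by
  obtain ⟨hMpsd, hMsum⟩ := hM
  have hSM : ∀ x, S x * M x = 0 := fun x =>
    aux_psd_trace_mul_zero (hS x) (hMpsd x) (horth x)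
  have hMS : ∀ x, M x * S x = 0 := fun x => by
    have : (S x * M x)ᴴ = 0 := by rw [hSM x]; simp
    rwa [conjTranspose_mul, (hS x).1, (hMpsd x).1] at this
  have hqρ : ∀ x, (q x : ℂ) • ρ x = K - S x := fun x => by
    rw [hKS x]; abel
  have hsum : (∑ x, (q x : ℂ) • (ρ x * M x)) = K := by
    have : ∀ x ∈ Finset.univ, (q x : ℂ) • (ρ x * M x) = K * M x := fun x _ => by
      rw [← Matrix.smul_mul, hqρ x, Matrix.sub_mul, hSM x, sub_zero]
    rw [Finset.sum_congr rfl this, ← Finset.mul_sum, hMsum, mul_one]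
  constructor
  · intro x y
    rw [hqρ x, hqρ y]
    have h2 : K - S x - (K - S y) = S y - S x := by abel
    rw [h2, Matrix.mul_sub, Matrix.sub_mul, Matrix.mul_assoc, hSM y, hMS x]
    simp
  · intro y
    rw [hsum, hqρ y]
    have h2 : K - (K - S y) = S y := by abel
    rw [h2]
    exact hS y
end

section
/- (Helstrom bound.) Let ρ_1 and ρ_2 be density matrices on ℂ^d and let q_1, q_2 ≥ 0 with q_1 + q_2 = 1. Then the maximum of q_1 tr(M_1 ρ_1) + q_2 tr(M_2 ρ_2) over all pairs of positive semidefinite matrices M_1, M_2 with M_1 + M_2 = I equals (1 + ‖q_1 ρ_1 − q_2 ρ_2‖₁)/2, and this maximum is attained. -/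
open BigOperators Matrix
open scoped ComplexOrder

/-- The trace norm `‖A‖₁ = tr √(Aᴴ A)`. -/
noncomputable def traceNorm {d : ℕ} (A : Matrix (Fin d) (Fin d) ℂ) : ℝ :=
  (((Matrix.posSemidef_conjTranspose_mul_self A).1.eigenvectorUnitary : Matrix (Fin d) (Fin d) ℂ) *
    Matrix.diagonal (((↑) : ℝ → ℂ) ∘ Real.sqrt ∘ (Matrix.posSemidef_conjTranspose_mul_self A).1.eigenvalues) *
    (star (Matrix.posSemidef_conjTranspose_mul_self A).1.eigenvectorUnitary :
      Matrix (Fin d) (Fin d) ℂ)).trace.re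

lemma psd_diag_nonneg {d : ℕ} {N : Matrix (Fin d) (Fin d) ℂ} (hN : N.PosSemidef) (i : Fin d) :
    0 ≤ N i i := by
  exact hN.diag_nonneg

lemma max_half (x : ℝ) : max x 0 = (x + |x|) / 2 := by
  rcases le_total 0 x with h | h
  · rw [max_eq_left h, abs_of_nonneg h]; ring
  · rw [max_eq_right h, abs_of_nonpos h]; ring

/-- Helstrom bound: the maximum of
`q₁ tr(M₁ ρ₁) + q₂ tr(M₂ ρ₂)` over two-outcome POVMs `(M₁, M₂)` equals
`(1 + ‖q₁ ρ₁ − q₂ ρ₂‖₁)/2`, and it is attained. -/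
theorem helstrom_bound
    (d : ℕ) (ρ₁ ρ₂ : Matrix (Fin d) (Fin d) ℂ)
    (hρ₁ : IsDensityMatrix ρ₁) (hρ₂ : IsDensityMatrix ρ₂)
    (q₁ q₂ : ℝ) (hq₁ : 0 ≤ q₁) (hq₂ : 0 ≤ q₂) (hq : q₁ + q₂ = 1) :
    IsGreatest {v : ℝ | ∃ M₁ M₂ : Matrix (Fin d) (Fin d) ℂ,
        M₁.PosSemidef ∧ M₂.PosSemidef ∧ M₁ + M₂ = 1 ∧
        v = q₁ * ((M₁ * ρ₁).trace).re + q₂ * ((M₂ * ρ₂).trace).re}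
      ((1 + traceNorm ((q₁ : ℂ) • ρ₁ - (q₂ : ℂ) • ρ₂)) / 2) := by
  set Δ : Matrix (Fin d) (Fin d) ℂ := (q₁ : ℂ) • ρ₁ - (q₂ : ℂ) • ρ₂ with hΔdef
  have hΔ : Δ.IsHermitian := by
    simp [hΔdef, Matrix.IsHermitian, conjTranspose_sub, conjTranspose_smul,
      hρ₁.1.1.eq, hρ₂.1.1.eq, Complex.star_def, Complex.conj_ofReal]
  set U : Matrix (Fin d) (Fin d) ℂ := (hΔ.eigenvectorUnitary : Matrix (Fin d) (Fin d) ℂ)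
    with hUdef
  have hU1 : star U * U = 1 := mem_unitaryGroup_iff'.mp hΔ.eigenvectorUnitary.2
  have hU2 : U * star U = 1 := mem_unitaryGroup_iff.mp hΔ.eigenvectorUnitary.2
  set lam : Fin d → ℝ := hΔ.eigenvalues with hlamdef
  set Φ : (Fin d → ℝ) → Matrix (Fin d) (Fin d) ℂ :=
    fun f => U * diagonal ((↑) ∘ f) * star U with hΦdef
  have hΔΦ : Δ = Φ lam := hΔ.spectral_theorem
  have hcast : ∀ f g : Fin d → ℝ,
      (fun i => ((↑) ∘ f) i * ((↑) ∘ g) i) = ((↑) ∘ fun i => f i * g i : Fin d → ℂ) := by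
    intro f g; funext i; simp
  have hΦmul : ∀ f g, Φ f * Φ g = Φ (fun i => f i * g i) := by
    intro f g
    have hdd : diagonal ((↑) ∘ f : Fin d → ℂ) * diagonal ((↑) ∘ g) =
        diagonal ((↑) ∘ fun i => f i * g i) := by
      rw [diagonal_mul_diagonal, hcast]
    simp only [hΦdef, mul_assoc]
    rw [← mul_assoc (star U) U, hU1, one_mul, ← mul_assoc _ _ (star U), hdd]
  have hΦtrace : ∀ f, (Φ f).trace = ∑ i, (f i : ℂ) := by
    intro f
    simp only [hΦdef]
    rw [trace_mul_comm, ← mul_assoc, hU1, one_mul, trace_diagonal]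
    simp [Function.comp]
  have hΦpsd : ∀ f, (∀ i, 0 ≤ f i) → (Φ f).PosSemidef := by
    intro f hf
    have hdiag : (diagonal ((↑) ∘ f) : Matrix (Fin d) (Fin d) ℂ).PosSemidef := by
      rw [posSemidef_diagonal_iff]
      intro i
      simpa [Function.comp] using Complex.zero_le_real.mpr (hf i)
    simpa [hΦdef, Matrix.star_eq_conjTranspose] using hdiag.mul_mul_conjTranspose_same U
  have hΦadd : ∀ f g, Φ f + Φ g = Φ (fun i => f i + g i) := by
    intro f g
    simp only [hΦdef]
    rw [← add_mul, ← mul_add, diagonal_add]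
    have : (fun i => ((↑) ∘ f) i + ((↑) ∘ g) i) = ((↑) ∘ fun i => f i + g i : Fin d → ℂ) := by
      funext i; simp
    rw [this]
  have hΦone : Φ (fun _ => 1) = 1 := by
    have h : ((↑) ∘ fun _ : Fin d => (1:ℝ)) = (fun _ : Fin d => (1:ℂ)) := by
      funext i; simp
    simp only [hΦdef, h, diagonal_one, mul_one, hU2]
  -- trace norm computation
  have habs : Φ (fun i => |lam i|) = cfc Real.sqrt (Δᴴ * Δ) := by
    have h1 : Φ (fun i => |lam i|) = cfc (fun x : ℝ => |x|) Δ := by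
      rw [hΔ.cfc_eq, Matrix.IsHermitian.cfc, Unitary.conjStarAlgAut_apply]; rfl
    rw [h1, hΔ.eq, ← pow_two, ← cfc_comp_pow Real.sqrt 2 Δ]
    congr 1; funext x; exact (Real.sqrt_sq_eq_abs x).symm
  have hTN : traceNorm Δ = ∑ i, |lam i| := by
    have e : traceNorm Δ = (cfc Real.sqrt (Δᴴ * Δ)).trace.re := by
      rw [traceNorm, (posSemidef_conjTranspose_mul_self Δ).1.cfc_eq, Matrix.IsHermitian.cfc,
        Unitary.conjStarAlgAut_apply]; rfl
    rw [e, ← habs, hΦtrace, ← Complex.ofReal_sum, Complex.ofReal_re]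
  -- sum of eigenvalues
  have hsumlam : ∑ i, lam i = q₁ - q₂ := by
    have h1 : Δ.trace = ((q₁ - q₂ : ℝ) : ℂ) := by
      simp [hΔdef, trace_sub, trace_smul, hρ₁.2, hρ₂.2, smul_eq_mul]
    have h2 : Δ.trace = ((∑ i, lam i : ℝ) : ℂ) := by
      rw [hΔΦ, hΦtrace, Complex.ofReal_sum]
    rw [h1] at h2
    exact_mod_cast h2.symm
  -- key value identity
  have key : ∀ M₁ M₂ : Matrix (Fin d) (Fin d) ℂ, M₁ + M₂ = 1 →
      q₁ * ((M₁ * ρ₁).trace).re + q₂ * ((M₂ * ρ₂).trace).re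
        = q₂ + ((M₁ * Δ).trace).re := by
    intro M₁ M₂ hM
    have hM₂ : M₂ = 1 - M₁ := by rw [← hM, add_sub_cancel_left]
    have h1 : (M₁ * Δ).trace = (q₁ : ℂ) * (M₁ * ρ₁).trace - (q₂ : ℂ) * (M₁ * ρ₂).trace := by
      simp [hΔdef, mul_sub, Matrix.mul_smul, trace_sub, trace_smul, smul_eq_mul]
    have h2 : (M₂ * ρ₂).trace = 1 - (M₁ * ρ₂).trace := by
      rw [hM₂, sub_mul, one_mul, trace_sub, hρ₂.2]
    rw [h1, h2]
    simp only [Complex.sub_re, Complex.one_re, Complex.re_ofReal_mul]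
    ring
  -- arithmetic identity for the target value
  have htarget : (1 + traceNorm Δ) / 2 = q₂ + ∑ i, max (lam i) 0 := by
    have : ∑ i, max (lam i) 0 = ((∑ i, lam i) + ∑ i, |lam i|) / 2 := by
      rw [Finset.sum_congr rfl (fun i _ => max_half (lam i))]
      rw [← Finset.sum_div, Finset.sum_add_distrib]
    rw [hTN, this, hsumlam]
    linarith
  have hif : (fun i => (if 0 ≤ lam i then (1:ℝ) else 0) + (if 0 ≤ lam i then (0:ℝ) else 1))
      = fun _ => 1 := by
    funext i; by_cases h : 0 ≤ lam i <;> simp [h]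
  constructor
  · -- attained
    refine ⟨Φ (fun i => if 0 ≤ lam i then 1 else 0),
      Φ (fun i => if 0 ≤ lam i then 0 else 1), ?_, ?_, ?_, ?_⟩
    · exact hΦpsd _ (fun i => by positivity)
    · exact hΦpsd _ (fun i => by positivity)
    · rw [hΦadd, hif, hΦone]
    · rw [key _ _ (by rw [hΦadd, hif, hΦone])]
      rw [htarget]
      congr 1
      rw [hΔΦ, hΦmul, hΦtrace, ← Complex.ofReal_sum, Complex.ofReal_re]
      refine Finset.sum_congr rfl (fun i _ => ?_)
      by_cases h : 0 ≤ lam i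
      · simp [h, max_eq_left h]
      · simp [h, max_eq_right (le_of_not_ge h)]
  · -- upper bound
    rintro v ⟨M₁, M₂, hM₁, hM₂, hM, rfl⟩
    rw [key _ _ hM, htarget]
    gcongr
    set N : Matrix (Fin d) (Fin d) ℂ := star U * M₁ * U with hNdef
    have hN : N.PosSemidef := by
      simpa [hNdef, Matrix.star_eq_conjTranspose] using hM₁.conjTranspose_mul_mul_same U
    have hN' : (1 - N).PosSemidef := by
      have h : star U * M₂ * U = 1 - N := by
        have hM₂' : M₂ = 1 - M₁ := by rw [← hM, add_sub_cancel_left]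
        rw [hM₂', hNdef, mul_sub, sub_mul, mul_one, hU1]
      rw [← h]
      simpa [Matrix.star_eq_conjTranspose] using hM₂.conjTranspose_mul_mul_same U
    have hdiag1 : ∀ i, 0 ≤ (N i i).re := fun i => (Complex.le_def.mp (psd_diag_nonneg hN i)).1
    have hdiag2 : ∀ i, (N i i).re ≤ 1 := by
      intro i
      have := (Complex.le_def.mp (psd_diag_nonneg hN' i)).1
      simp only [Matrix.sub_apply, one_apply_eq, Complex.sub_re, Complex.one_re, Complex.zero_re] at this
      linarith
    have htr : (M₁ * Δ).trace = ∑ i, N i i * (lam i : ℂ) := by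
      have e1 : M₁ * Δ = M₁ * U * diagonal ((↑) ∘ lam) * star U := by
        rw [hΔΦ]; simp only [hΦdef, ← mul_assoc]
      have e3 : star U * (M₁ * U * diagonal ((↑) ∘ lam)) = N * diagonal ((↑) ∘ lam) := by
        rw [hNdef]; simp only [← mul_assoc]
      rw [e1, trace_mul_comm, e3]
      simp [Matrix.trace, Matrix.diag, Matrix.mul_diagonal, Function.comp]
    rw [htr, Complex.re_sum]
    refine Finset.sum_le_sum (fun i _ => ?_)
    have hre : (N i i * (lam i : ℂ)).re = (N i i).re * lam i := by
      simp [Complex.mul_re]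
    rw [hre]
    rcases le_or_gt 0 (lam i) with h | h
    · calc (N i i).re * lam i ≤ 1 * lam i := mul_le_mul_of_nonneg_right (hdiag2 i) h
        _ = lam i := one_mul _
        _ ≤ max (lam i) 0 := le_max_left _ _
    · calc (N i i).re * lam i ≤ 0 := mul_nonpos_of_nonneg_of_nonpos (hdiag1 i) h.le
        _ ≤ max (lam i) 0 := le_max_right _ _
end

section
/- (Geometrically uniform trine states.) For x = 1, 2, 3 let |ψ_x⟩ = (cos(π(x−1)/3), sin(π(x−1)/3)) ∈ ℂ² (unit vectors whose Bloch vectors are three coplanar unit vectors at mutual angle 2π/3), and let ρ_x = |ψ_x⟩⟨ψ_x|. Then the guessing probability for the three states ρ_1, ρ_2, ρ_3 with uniform prior probabilities 1/3 equals 2/3; that is, the maximum of (1/3) Σ_{x=1}^{3} tr(M_x ρ_x) over 3-outcome POVMs (M_x) is 2/3. -/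
open BigOperators Matrix Real
open scoped ComplexOrder

/-- The pure qubit state (projector) `|ψ⟩⟨ψ|` with `|ψ⟩ = (cos a, sin a)`. -/
noncomputable def pureState (a : ℝ) : Matrix (Fin 2) (Fin 2) ℂ :=
  Matrix.vecMulVec ![(Real.cos a : ℂ), (Real.sin a : ℂ)]
    (star ![(Real.cos a : ℂ), (Real.sin a : ℂ)])

lemma pureState_apply (a : ℝ) (i j : Fin 2) :
    pureState a i j = (![(Real.cos a : ℂ), (Real.sin a : ℂ)] i) *
      (starRingEnd ℂ) (![(Real.cos a : ℂ), (Real.sin a : ℂ)] j) := by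
  simp [pureState, Matrix.vecMulVec_apply, Pi.star_apply, RCLike.star_def]

lemma pureState_posSemidef (a : ℝ) : (pureState a).PosSemidef := by
  have h : pureState a =
      (Matrix.replicateCol Unit ![(Real.cos a : ℂ), (Real.sin a : ℂ)]) *
      (Matrix.replicateCol Unit ![(Real.cos a : ℂ), (Real.sin a : ℂ)])ᴴ := by
    rw [Matrix.conjTranspose_replicateCol, ← Matrix.vecMulVec_eq]
    rfl
  rw [h]
  exact Matrix.posSemidef_self_mul_conjTranspose _

lemma pureState_mul_self (a : ℝ) : pureState a * pureState a = pureState a := by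
  ext i j
  simp only [Matrix.mul_apply, pureState_apply, Fin.sum_univ_two]
  have h1 : ((Real.cos a : ℂ)) * (starRingEnd ℂ) (Real.cos a) +
      ((Real.sin a : ℂ)) * (starRingEnd ℂ) (Real.sin a) = 1 := by
    simp only [Complex.conj_ofReal, ← Complex.ofReal_mul, ← Complex.ofReal_add]
    norm_cast
    rw [← Real.cos_sq_add_sin_sq a]; ring
  fin_cases i <;> fin_cases j <;>
    simp only [Matrix.cons_val_zero, Matrix.cons_val_one, Matrix.head_cons] <;>
    · rw [show ∀ u v w z : ℂ, u * (starRingEnd ℂ) v * (v * (starRingEnd ℂ) z) +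
          u * (starRingEnd ℂ) w * (w * (starRingEnd ℂ) z)
          = (v * (starRingEnd ℂ) v + w * (starRingEnd ℂ) w) * (u * (starRingEnd ℂ) z)
        from fun u v w z => by ring]
      rw [h1, one_mul]

lemma pureState_trace (a : ℝ) : (pureState a).trace = 1 := by
  simp only [Matrix.trace, Matrix.diag, Fin.sum_univ_two, pureState_apply]
  simp only [Matrix.cons_val_zero, Matrix.cons_val_one, Matrix.head_cons,
    Complex.conj_ofReal, ← Complex.ofReal_mul, ← Complex.ofReal_add]
  norm_cast
  rw [← Real.cos_sq_add_sin_sq a]; ring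

lemma one_sub_pureState (a : ℝ) : (1 : Matrix (Fin 2) (Fin 2) ℂ) - pureState a
    = pureState (a + Real.pi / 2) := by
  have hc : Real.cos (a + Real.pi / 2) = -Real.sin a := by
    rw [Real.cos_add_pi_div_two]
  have hs : Real.sin (a + Real.pi / 2) = Real.cos a := by
    rw [Real.sin_add_pi_div_two]
  have hid : Real.sin a ^ 2 + Real.cos a ^ 2 = 1 := Real.sin_sq_add_cos_sq a
  have hid' : (Real.sin a : ℂ) ^ 2 + (Real.cos a : ℂ) ^ 2 = 1 := by exact_mod_cast hid
  ext i j
  fin_cases i <;> fin_cases j <;>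
    simp only [pureState_apply, Matrix.sub_apply, Matrix.one_apply, hc, hs,
      Matrix.cons_val_zero, Matrix.cons_val_one, Matrix.head_cons,
      Complex.ofReal_neg, map_neg, Complex.conj_ofReal, Fin.mk_one, Fin.zero_eta,
      if_true, if_false, eq_self_iff_true, one_ne_zero, zero_ne_one, ite_true, ite_false] <;>
    first
      | ring1
      | linear_combination hid'
      | linear_combination -hid'

lemma psd_trace_re_nonneg {n : Type*} [Fintype n] [DecidableEq n]
    {C : Matrix n n ℂ} (hC : C.PosSemidef) : 0 ≤ C.trace.re := by
  have h : ∀ i, 0 ≤ (C i i).re := by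
    intro i
    have := hC.re_dotProduct_nonneg (Pi.single i 1)
    simpa [Matrix.mulVec_single, dotProduct, Pi.single_apply,
      Finset.sum_ite_eq', RCLike.star_def] using this
  simp only [Matrix.trace, Matrix.diag, Complex.re_sum]
  exact Finset.sum_nonneg fun i _ => h i

lemma trace_mul_re_nonneg {n : Type*} [Fintype n] [DecidableEq n]
    {A B : Matrix n n ℂ} (hA : A.PosSemidef) (hB : B.PosSemidef) :
    0 ≤ ((A * B).trace).re := by
  obtain ⟨S, e, hsq⟩ : ∃ S : Matrix n n ℂ, Sᴴ = S ∧ S * S = B := by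
    open scoped MatrixOrder in
    exact ⟨CFC.sqrt B, (CFC.sqrt_nonneg B).posSemidef.isHermitian.eq,
      CFC.sqrt_mul_sqrt_self B hB.nonneg⟩
  have h2 : S * A * (S)ᴴ = S * A * S := by rw [e]
  have h1 : (S * A * S).trace = (A * B).trace := by
    rw [Matrix.trace_mul_cycle, Matrix.mul_assoc, ← Matrix.mul_assoc, hsq,
      Matrix.trace_mul_comm]
  have h := psd_trace_re_nonneg (hA.mul_mul_conjTranspose_same S)
  rw [h2, h1] at h
  exact h

lemma smul_posSemidef {n : Type*} [Fintype n] {A : Matrix n n ℂ}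
    (hA : A.PosSemidef) {c : ℂ} (hc : 0 ≤ c) : (c • A).PosSemidef := by
  constructor
  · have hsc : star c = c := IsSelfAdjoint.of_nonneg hc
    rw [Matrix.IsHermitian, Matrix.conjTranspose_smul, hA.1.eq, hsc]
  · exact (hA.smul hc).2

/-- geometrically uniform trine states: for the three trine states
`|ψ_x⟩ = (cos(π(x−1)/3), sin(π(x−1)/3))`, `x = 1, 2, 3`, with uniform priors `1/3`,
the guessing probability equals `2/3`. -/
theorem trine_states_guessing_probability :
    IsGreatest {v : ℝ | ∃ M : Fin 3 → Matrix (Fin 2) (Fin 2) ℂ, IsPOVM M ∧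
        v = ∑ x : Fin 3, (1 / 3 : ℝ) *
          ((M x * pureState ((x : ℕ) * Real.pi / 3)).trace).re}
      (2 / 3) := by
  constructor
  · -- membership: the pretty-good measurement M x = (2/3) • pureState
    refine ⟨fun x => ((2/3 : ℝ) : ℂ) • pureState ((x : ℕ) * Real.pi / 3), ⟨?_, ?_⟩, ?_⟩
    · intro x
      refine smul_posSemidef (pureState_posSemidef _) ?_
      rw [Complex.zero_le_real]; norm_num
    · -- sum equals identity
      have hc3 : Real.cos (2 * Real.pi / 3) = -(1/2) := by
        have : (2 : ℝ) * Real.pi / 3 = Real.pi - Real.pi / 3 := by ring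
        rw [this, Real.cos_pi_sub, Real.cos_pi_div_three]
      have hs3 : Real.sin (2 * Real.pi / 3) = Real.sqrt 3 / 2 := by
        have : (2 : ℝ) * Real.pi / 3 = Real.pi - Real.pi / 3 := by ring
        rw [this, Real.sin_pi_sub, Real.sin_pi_div_three]
      ext i j
      simp only [Fin.sum_univ_three, Matrix.sum_apply, Matrix.add_apply]
      have h0 : ((0 : Fin 3) : ℕ) = 0 := rfl
      have h1 : ((1 : Fin 3) : ℕ) = 1 := rfl
      have h2 : ((2 : Fin 3) : ℕ) = 2 := rfl
      fin_cases i <;> fin_cases j <;>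
        simp [h0, h1, h2, pureState_apply, Matrix.one_apply, Complex.conj_ofReal,
          Real.cos_pi_div_three, Real.sin_pi_div_three, hc3, hs3,
          Real.cos_zero, Real.sin_zero,
          show (0 : ℕ) * Real.pi / 3 = 0 by ring,
          show (1 : ℕ) * Real.pi / 3 = Real.pi / 3 by ring,
          show (2 : ℕ) * Real.pi / 3 = 2 * Real.pi / 3 by ring] <;>
        · ring_nf
          norm_num [map_ofNat (starRingEnd ℂ) 2,
            show ((Real.sqrt 3 : ℂ))^2 = 3 by
              norm_cast; exact Real.sq_sqrt (by norm_num)]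
    · -- value is 2/3
      have hval : ∀ a : ℝ, (((((2/3 : ℝ) : ℂ) • pureState a) * pureState a).trace).re
          = 2/3 := by
        intro a
        rw [Matrix.smul_mul, Matrix.trace_smul, pureState_mul_self, pureState_trace]
        simp
      simp only [hval, Fin.sum_univ_three]
      norm_num
  · -- upper bound
    rintro v ⟨M, ⟨hpsd, hsum⟩, rfl⟩
    have key : ∀ x : Fin 3, ((M x * pureState ((x : ℕ) * Real.pi / 3)).trace).re
        ≤ ((M x).trace).re := by
      intro x
      set a := ((x : ℕ) : ℝ) * Real.pi / 3
      have h := trace_mul_re_nonneg (hpsd x) (pureState_posSemidef (a + Real.pi / 2))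
      rw [← one_sub_pureState a, Matrix.mul_sub, Matrix.mul_one,
        Matrix.trace_sub, Complex.sub_re] at h
      linarith
    have hsumtr : ∑ x : Fin 3, ((M x).trace).re = 2 := by
      have : ∑ x : Fin 3, (M x).trace = (2 : ℂ) := by
        rw [← Matrix.trace_sum, hsum]
        simp [Matrix.trace_one]
      calc ∑ x : Fin 3, ((M x).trace).re = (∑ x : Fin 3, (M x).trace).re := by
            rw [Complex.re_sum]
        _ = 2 := by rw [this]; norm_num
    calc ∑ x : Fin 3, (1 / 3 : ℝ) * ((M x * pureState ((x : ℕ) * Real.pi / 3)).trace).re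
        ≤ ∑ x : Fin 3, (1 / 3 : ℝ) * ((M x).trace).re := by
          apply Finset.sum_le_sum
          intro x _
          have := key x
          linarith
      _ = (1/3 : ℝ) * ∑ x : Fin 3, ((M x).trace).re := by
          rw [Finset.mul_sum]
      _ = 2/3 := by rw [hsumtr]; norm_num
end

section
/- (Three equal-purity qubit states with the origin in their Bloch polytope.) Let f ∈ [0,1], and let v_1, v_2, v_3 ∈ ℝ³ with ‖v_x‖ = f for each x and with the zero vector contained in the convex hull of {v_1, v_2, v_3}. Let ρ_x = (I + v_x·(σ1,σ2,σ3))/2 be the corresponding Bloch states on ℂ². Then the guessing probability for ρ_1, ρ_2, ρ_3 with uniform prior probabilities 1/3 equals (1 + f)/3, independently of any other details (such as the angles) of the three states. -/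
open BigOperators Matrix
open scoped ComplexOrder

/-- The Bloch state `ρ(v) = (I + v₁σ₁ + v₂σ₂ + v₃σ₃)/2` of a Bloch vector `v ∈ ℝ³`. -/
noncomputable def blochState (v : EuclideanSpace ℝ (Fin 3)) : Matrix (Fin 2) (Fin 2) ℂ :=
  (1 / 2 : ℂ) • ((1 : Matrix (Fin 2) (Fin 2) ℂ)
    + (v 0 : ℂ) • !![0, 1; 1, 0]
    + (v 1 : ℂ) • !![0, -Complex.I; Complex.I, 0]
    + (v 2 : ℂ) • !![1, 0; 0, -1])

noncomputable def pauli (v : EuclideanSpace ℝ (Fin 3)) : Matrix (Fin 2) (Fin 2) ℂ :=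
  !![(v 2 : ℂ), (v 0 : ℂ) - (v 1 : ℂ) * Complex.I;
     (v 0 : ℂ) + (v 1 : ℂ) * Complex.I, -(v 2 : ℂ)]

lemma blochState_eq (v : EuclideanSpace ℝ (Fin 3)) :
    blochState v = (1 / 2 : ℂ) • ((1 : Matrix (Fin 2) (Fin 2) ℂ) + pauli v) := by
  unfold blochState pauli
  congr 1
  ext i j
  fin_cases i <;> fin_cases j <;>
    simp [Matrix.one_apply] <;> ring

lemma pauli_conjTranspose (v : EuclideanSpace ℝ (Fin 3)) : (pauli v)ᴴ = pauli v := by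
  unfold pauli
  ext i j
  fin_cases i <;> fin_cases j <;> simp [Matrix.conjTranspose_apply] <;> ring

lemma pauli_trace (v : EuclideanSpace ℝ (Fin 3)) : (pauli v).trace = 0 := by
  simp [pauli, Matrix.trace, Fin.sum_univ_two]

lemma pauli_mul_trace (u w : EuclideanSpace ℝ (Fin 3)) :
    (pauli u * pauli w).trace = 2 * ((u 0 * w 0 + u 1 * w 1 + u 2 * w 2 : ℝ) : ℂ) := by
  simp [pauli, Matrix.trace, Matrix.mul_apply, Fin.sum_univ_two]
  push_cast
  ring_nf
  simp [Complex.I_sq]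

lemma pauli_mul_self (v : EuclideanSpace ℝ (Fin 3)) :
    pauli v * pauli v = ((v 0 ^ 2 + v 1 ^ 2 + v 2 ^ 2 : ℝ) : ℂ) • 1 := by
  ext i j
  fin_cases i <;> fin_cases j <;>
    · simp [pauli, Matrix.mul_apply, Fin.sum_univ_two, Matrix.one_apply]
      try ring_nf
      try simp [Complex.I_sq]
      try ring

lemma smul_psd {A : Matrix (Fin 2) (Fin 2) ℂ} (hA : A.PosSemidef) {r : ℝ} (hr : 0 ≤ r) :
    ((r : ℂ) • A).PosSemidef := by
  rw [Matrix.posSemidef_iff_dotProduct_mulVec]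
  constructor
  · show ((r : ℂ) • A)ᴴ = (r : ℂ) • A
    rw [Matrix.conjTranspose_smul, hA.1.eq]
    simp
  · intro x
    rw [Matrix.smul_mulVec, dotProduct_smul]
    exact mul_nonneg (by exact_mod_cast Complex.zero_le_real.mpr hr) (hA.dotProduct_mulVec_nonneg x)

lemma smul_one_sub_pauli_psd (f : ℝ) (hf : 0 ≤ f) (v : EuclideanSpace ℝ (Fin 3))
    (hv : v 0 ^ 2 + v 1 ^ 2 + v 2 ^ 2 = f ^ 2) :
    ((f : ℂ) • 1 - pauli v).PosSemidef := by
  set A : Matrix (Fin 2) (Fin 2) ℂ := (f : ℂ) • 1 - pauli v with hA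
  have hherm : Aᴴ = A := by
    rw [hA, Matrix.conjTranspose_sub, Matrix.conjTranspose_smul, pauli_conjTranspose]
    simp
  have hsq : Aᴴ * A = ((2 * f : ℝ) : ℂ) • A := by
    rw [hherm, hA]
    rw [sub_mul, mul_sub, mul_sub, smul_mul_assoc, mul_smul_comm, one_mul,
      smul_mul_assoc, one_mul, pauli_mul_self, hv]
    push_cast
    ext i j
    simp [Matrix.sub_apply, Matrix.add_apply, Matrix.smul_apply]
    ring
  rcases eq_or_lt_of_le hf with h0 | hpos
  · have h' : v 0 ^ 2 + v 1 ^ 2 + v 2 ^ 2 = 0 := by rw [hv, ← h0]; ring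
    have h0' : v 0 = 0 := by nlinarith [sq_nonneg (v 0), sq_nonneg (v 1), sq_nonneg (v 2)]
    have h1' : v 1 = 0 := by nlinarith [sq_nonneg (v 0), sq_nonneg (v 1), sq_nonneg (v 2)]
    have h2' : v 2 = 0 := by nlinarith [sq_nonneg (v 0), sq_nonneg (v 1), sq_nonneg (v 2)]
    have : A = 0 := by
      rw [hA, ← h0]
      ext i j
      fin_cases i <;> fin_cases j <;> simp [pauli, h0', h1', h2']
    rw [this]
    exact Matrix.PosSemidef.zero
  · have : A = ((1 / (2 * f) : ℝ) : ℂ) • (Aᴴ * A) := by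
      rw [hsq]
      rw [smul_smul]
      norm_cast
      rw [one_div, inv_mul_cancel₀ (by positivity)]
      simp
    rw [this]
    exact smul_psd (Matrix.posSemidef_conjTranspose_mul_self A) (by positivity)

lemma trace_psd_nonneg {n : ℕ} {A : Matrix (Fin n) (Fin n) ℂ} (hA : A.PosSemidef) :
    0 ≤ A.trace := by
  rw [Matrix.trace]
  apply Finset.sum_nonneg
  intro i _
  have := hA.dotProduct_mulVec_nonneg (Pi.single i 1)
  simpa [dotProduct, Matrix.mulVec, Pi.single_apply] using this

lemma trace_mul_psd_nonneg {n : ℕ} {A B : Matrix (Fin n) (Fin n) ℂ}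
    (hA : A.PosSemidef) (hB : B.PosSemidef) : 0 ≤ (A * B).trace := by
  open MatrixOrder in obtain ⟨C, hC⟩ := CStarAlgebra.nonneg_iff_eq_star_mul_self.mp hB.nonneg
  rw [Matrix.star_eq_conjTranspose] at hC
  rw [hC, ← Matrix.mul_assoc, Matrix.trace_mul_cycle]
  exact trace_psd_nonneg (hA.mul_mul_conjTranspose_same C)

lemma pauli_zero : pauli 0 = 0 := by
  ext i j; fin_cases i <;> fin_cases j <;> simp [pauli]

lemma sum_smul_pauli (c : Fin 3 → ℝ) (w : Fin 3 → EuclideanSpace ℝ (Fin 3)) :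
    ∑ x : Fin 3, (c x : ℂ) • pauli (w x) = pauli (∑ x : Fin 3, c x • w x) := by
  ext i j
  fin_cases i <;> fin_cases j
  all_goals
    simp [pauli, Fin.sum_univ_three, Matrix.sum_apply, PiLp.smul_apply, PiLp.add_apply]
  all_goals try push_cast
  all_goals try ring


/-- three equal-purity qubit states whose Bloch polytope contains the
origin: if `‖v_x‖ = f` for `x = 1, 2, 3` and `0` lies in the convex hull of the three
Bloch vectors, then the guessing probability with uniform priors `1/3` is `(1 + f)/3`. -/
theorem three_equal_purity_bloch_states_guessing_probability
    (f : ℝ) (hf : f ∈ Set.Icc (0 : ℝ) 1)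
    (v : Fin 3 → EuclideanSpace ℝ (Fin 3))
    (hnorm : ∀ x, ‖v x‖ = f)
    (hhull : (0 : EuclideanSpace ℝ (Fin 3)) ∈ convexHull ℝ (Set.range v)) :
    IsGreatest {w : ℝ | ∃ M : Fin 3 → Matrix (Fin 2) (Fin 2) ℂ, IsPOVM M ∧
        w = ∑ x : Fin 3, (1 / 3 : ℝ) * ((M x * blochState (v x)).trace).re}
      ((1 + f) / 3) := by
  have hf0 := hf.1
  have hsq : ∀ x, v x 0 ^ 2 + v x 1 ^ 2 + v x 2 ^ 2 = f ^ 2 := by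
    intro x
    have h1 : ‖v x‖ ^ 2 = f ^ 2 := by rw [hnorm x]
    rw [EuclideanSpace.norm_eq, Real.sq_sqrt (Finset.sum_nonneg fun i _ => sq_nonneg _)] at h1
    simpa [Fin.sum_univ_three, Real.norm_eq_abs, sq_abs] using h1
  constructor
  · -- membership: a POVM achieving (1+f)/3
    rcases eq_or_lt_of_le hf0 with hfz | hfpos
    · -- f = 0 : all states are maximally mixed
      have hv0 : ∀ x, v x 0 = 0 ∧ v x 1 = 0 ∧ v x 2 = 0 := by
        intro x
        have h := hsq x
        rw [← hfz] at h
        refine ⟨?_, ?_, ?_⟩ <;>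
          nlinarith [sq_nonneg (v x 0), sq_nonneg (v x 1), sq_nonneg (v x 2)]
      refine ⟨fun _ => ((1 / 3 : ℝ) : ℂ) • 1, ⟨fun x => smul_psd Matrix.PosSemidef.one
        (by norm_num), ?_⟩, ?_⟩
      · rw [Fin.sum_univ_three, ← add_smul, ← add_smul]
        norm_num
      · have hb : ∀ x : Fin 3, blochState (v x) = (1 / 2 : ℂ) • 1 := by
          intro x
          rw [blochState_eq]
          have : pauli (v x) = 0 := by
            ext i j
            fin_cases i <;> fin_cases j <;>
              simp [pauli, (hv0 x).1, (hv0 x).2.1, (hv0 x).2.2]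
          rw [this, add_zero]
        simp only [hb]
        rw [← hfz]
        simp [Matrix.smul_mul, Matrix.one_mul, Matrix.trace_smul, Matrix.trace_one,
          Fin.sum_univ_three]
        norm_num
    · -- f > 0
      rw [convexHull_range_eq_exists_affineCombination] at hhull
      obtain ⟨s, wgt, hw0, hw1, hws⟩ := hhull
      rw [Finset.affineCombination_eq_linear_combination s v wgt hw1] at hws
      set c : Fin 3 → ℝ := fun i => if i ∈ s then wgt i else 0 with hc
      have hc0 : ∀ i, 0 ≤ c i := by
        intro i
        by_cases h : i ∈ s
        · simp only [hc, h, if_true]; exact hw0 i h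
        · simp [hc, h]
      have hc1 : ∑ i : Fin 3, c i = 1 := by
        rw [hc, ← hw1]
        rw [Finset.sum_ite_mem, Finset.univ_inter]
      have hcv : ∑ i : Fin 3, c i • v i = 0 := by
        rw [← hws]
        rw [Finset.sum_congr rfl (fun i (_ : i ∈ Finset.univ) => by
          rw [hc]; dsimp only; rw [ite_smul, zero_smul] :
          ∀ i ∈ Finset.univ, c i • v i = if i ∈ s then wgt i • v i else 0)]
        rw [Finset.sum_ite_mem, Finset.univ_inter]
      refine ⟨fun x => ((c x / f : ℝ) : ℂ) • ((f : ℂ) • 1 + pauli (v x)), ⟨?_, ?_⟩, ?_⟩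
      · intro x
        dsimp only
        have hneg : (f : ℂ) • 1 + pauli (v x) = (f : ℂ) • 1 - pauli (-(v x)) := by
          have : pauli (-(v x)) = -pauli (v x) := by
            ext i j; fin_cases i <;> fin_cases j <;> simp [pauli] <;> ring
          rw [this, sub_neg_eq_add]
        have hsq' : (-(v x)) 0 ^ 2 + (-(v x)) 1 ^ 2 + (-(v x)) 2 ^ 2 = f ^ 2 := by
          simpa using hsq x
        rw [hneg]
        exact smul_psd (smul_one_sub_pauli_psd f hf0 _ hsq') (div_nonneg (hc0 x) hf0)
      · have key : ∑ x : Fin 3, ((c x / f : ℝ) : ℂ) • ((f : ℂ) • 1 + pauli (v x))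
            = (∑ x : Fin 3, ((c x / f : ℝ) : ℂ) * (f : ℂ)) • 1
              + ∑ x : Fin 3, ((c x / f : ℝ) : ℂ) • pauli (v x) := by
          simp only [smul_add, Finset.sum_add_distrib, smul_smul, Finset.sum_smul]
        rw [key, sum_smul_pauli]
        have hfC : (f : ℂ) ≠ 0 := by exact_mod_cast hfpos.ne'
        have h1 : ∑ x : Fin 3, ((c x / f : ℝ) : ℂ) * (f : ℂ) = 1 := by
          have e : ∑ x : Fin 3, ((c x / f : ℝ) : ℂ) * (f : ℂ)
              = ((∑ x : Fin 3, c x : ℝ) : ℂ) := by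
            push_cast
            refine Finset.sum_congr rfl fun x _ => ?_
            field_simp
          rw [e, hc1, Complex.ofReal_one]
        have h2 : (∑ x : Fin 3, (c x / f) • v x) = 0 := by
          have : (∑ x : Fin 3, (c x / f) • v x) = (1 / f) • ∑ x : Fin 3, c x • v x := by
            rw [Finset.smul_sum]
            exact Finset.sum_congr rfl fun x _ => by rw [smul_smul]; ring_nf
          rw [this, hcv, smul_zero]
        rw [h1, h2, pauli_zero, one_smul, add_zero]
      · have htr : ∀ x : Fin 3,
            ((((c x / f : ℝ) : ℂ) • ((f : ℂ) • 1 + pauli (v x))) * blochState (v x)).trace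
            = ((c x * (1 + f) : ℝ) : ℂ) := by
          intro x
          rw [blochState_eq, Matrix.smul_mul, Matrix.mul_smul, Matrix.trace_smul,
            Matrix.trace_smul]
          have hprod : ((f : ℂ) • 1 + pauli (v x)) * (1 + pauli (v x))
              = (f : ℂ) • 1 + (f : ℂ) • pauli (v x) + pauli (v x)
                + pauli (v x) * pauli (v x) := by
            simp only [add_mul, mul_add, Matrix.smul_mul, Matrix.one_mul, Matrix.mul_one]
            abel
          rw [hprod]
          rw [Matrix.trace_add, Matrix.trace_add, Matrix.trace_add, Matrix.trace_smul,
            Matrix.trace_smul, pauli_trace, pauli_mul_self, Matrix.trace_smul,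
            Matrix.trace_one, hsq x]
          have hfC : (f : ℂ) ≠ 0 := by exact_mod_cast hfpos.ne'
          rw [Fintype.card_fin]
          field_simp
          push_cast
          linear_combination ((c x : ℂ) + (f : ℂ) * (c x : ℂ)) * mul_inv_cancel₀ hfC
        simp only [htr]
        rw [Fin.sum_univ_three] at hc1 ⊢
        simp only [Complex.ofReal_re]
        linear_combination (-(1 + f) / 3) * hc1
  · -- upper bound
    rintro w ⟨M, ⟨hMpsd, hMsum⟩, rfl⟩
    have key : ∀ x, ((M x * pauli (v x)).trace).re ≤ f * ((M x).trace).re := by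
      intro x
      have hpsd := smul_one_sub_pauli_psd f hf0 (v x) (hsq x)
      have h := trace_mul_psd_nonneg (hMpsd x) hpsd
      have hexp : (M x * ((f : ℂ) • 1 - pauli (v x))).trace
          = (f : ℂ) * (M x).trace - (M x * pauli (v x)).trace := by
        rw [Matrix.mul_sub, Matrix.trace_sub, Matrix.mul_smul, Matrix.trace_smul, Matrix.mul_one]
        simp
      rw [hexp] at h
      have h' := (Complex.le_def.mp h).1
      simp [Complex.sub_re, Complex.mul_re] at h'
      linarith
    have hsumtr : ∑ x : Fin 3, ((M x).trace).re = 2 := by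
      have : ∑ x : Fin 3, (M x).trace = 2 := by
        rw [← Matrix.trace_sum, hMsum]
        simp [Matrix.trace_one]
      calc ∑ x : Fin 3, ((M x).trace).re = (∑ x : Fin 3, (M x).trace).re := by
            rw [Complex.re_sum]
        _ = 2 := by rw [this]; norm_num
    have hval : ∀ x, ((M x * blochState (v x)).trace).re
        = (1 / 2) * (((M x).trace).re + ((M x * pauli (v x)).trace).re) := by
      intro x
      rw [blochState_eq, Matrix.mul_smul, Matrix.mul_add, Matrix.mul_one, Matrix.trace_smul,
        Matrix.trace_add]
      simp [Complex.add_re]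
      try ring
    rw [Fin.sum_univ_three]
    rw [hval 0, hval 1, hval 2]
    have k0 := key 0; have k1 := key 1; have k2 := key 2
    rw [Fin.sum_univ_three] at hsumtr
    nlinarith [k0, k1, k2, hsumtr]
end

section
/- (Two pairs of orthogonal qubit states.) Let |ψ_1⟩, |ψ_2⟩, |ψ_3⟩, |ψ_4⟩ be unit vectors in ℂ² with ⟨ψ_1|ψ_3⟩ = 0 and ⟨ψ_2|ψ_4⟩ = 0, and let ρ_x = |ψ_x⟩⟨ψ_x|. Then the guessing probability for ρ_1, ρ_2, ρ_3, ρ_4 with uniform prior probabilities 1/4 equals 1/2; equivalently, every such set of two orthogonal pairs has symmetry operator K = I/2 and lies in the same equivalence class of the minimum-error discrimination problem. -/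
open BigOperators Matrix
open scoped ComplexOrder

lemma rho_psd (u : Fin 2 → ℂ) : (Matrix.vecMulVec u (star u)).PosSemidef := by
  have : Matrix.vecMulVec u (star u) = (Matrix.replicateRow (Fin 1) (star u))ᴴ * Matrix.replicateRow (Fin 1) (star u) := by
    ext i j
    simp [Matrix.mul_apply, Matrix.vecMulVec_apply, Matrix.replicateRow_apply, Matrix.conjTranspose_apply]
  rw [this]
  exact Matrix.posSemidef_conjTranspose_mul_self _

lemma trace_mul_vmv (A : Matrix (Fin 2) (Fin 2) ℂ) (u : Fin 2 → ℂ) :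
    (A * Matrix.vecMulVec u (star u)).trace = dotProduct (star u) (A *ᵥ u) := by
  simp only [Matrix.trace, Matrix.diag, Matrix.mul_apply, Matrix.vecMulVec_apply,
    dotProduct, Matrix.mulVec, Pi.star_apply, Finset.mul_sum]
  exact Finset.sum_congr rfl fun i _ => Finset.sum_congr rfl fun j _ => by
    simp [dotProduct]; ring

lemma complete (u v : Fin 2 → ℂ)
    (hu : dotProduct (star u) u = 1) (hv : dotProduct (star v) v = 1)
    (huv : dotProduct (star u) v = 0) :
    Matrix.vecMulVec u (star u) + Matrix.vecMulVec v (star v) = 1 := by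
  have hvu : dotProduct (star v) u = 0 := by
    have h := congrArg star huv
    simp only [dotProduct, Fin.sum_univ_two, Pi.star_apply, star_add, star_mul',
      star_star, star_zero] at h ⊢
    linear_combination h
  set U : Matrix (Fin 2) (Fin 2) ℂ := Matrix.of ![![u 0, v 0], ![u 1, v 1]] with hU
  simp only [dotProduct, Fin.sum_univ_two, Pi.star_apply] at hu hv huv hvu
  have h1 : Uᴴ * U = 1 := by
    ext i j
    fin_cases i <;> fin_cases j <;>
      simp only [hU, Matrix.mul_apply, Fin.sum_univ_two, Matrix.conjTranspose_apply,
        Matrix.one_apply, Matrix.of_apply, Matrix.cons_val', Matrix.cons_val_zero,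
        Matrix.cons_val_one, Matrix.head_cons, Matrix.head_fin_const, Matrix.empty_val',
        Matrix.cons_val_fin_one, if_true, if_false, Fin.mk_zero, Fin.mk_one,
        Fin.zero_eta, Fin.isValue, ne_eq, one_ne_zero, zero_ne_one, not_false_eq_true,
        Matrix.one_apply_eq, Matrix.one_apply_ne] <;>
      first
        | linear_combination hu
        | linear_combination hv
        | linear_combination huv
        | linear_combination hvu
  have h2 : U * Uᴴ = 1 := mul_eq_one_comm.mp h1
  calc Matrix.vecMulVec u (star u) + Matrix.vecMulVec v (star v) = U * Uᴴ := by
        ext i j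
        fin_cases i <;> fin_cases j <;>
          simp [hU, Matrix.mul_apply, Fin.sum_univ_two, Matrix.vecMulVec_apply,
            Matrix.conjTranspose_apply]
    _ = 1 := h2

lemma psd_smul_quarter {A : Matrix (Fin 2) (Fin 2) ℂ} (hA : A.PosSemidef) :
    ((1/4 : ℂ) • A).PosSemidef := by
  refine Matrix.PosSemidef.of_dotProduct_mulVec_nonneg ?_ fun x => ?_
  · unfold Matrix.IsHermitian
    rw [Matrix.conjTranspose_smul, hA.1]
    norm_num
  · rw [Matrix.smul_mulVec, dotProduct_smul]
    have h4 : (0:ℂ) ≤ (1/4 : ℂ) := by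
      rw [Complex.le_def]; norm_num
    rw [smul_eq_mul]
    exact mul_nonneg h4 (hA.dotProduct_mulVec_nonneg x)

/-- two pairs of orthogonal qubit states: for unit vectors
`ψ₁, ψ₂, ψ₃, ψ₄ ∈ ℂ²` with `⟨ψ₁|ψ₃⟩ = 0` and `⟨ψ₂|ψ₄⟩ = 0`, the guessing probability
for the four pure states `ρ_x = |ψ_x⟩⟨ψ_x|` with uniform priors `1/4` equals `1/2`;
moreover `K = I/2` is a symmetry operator: `K ⪰ (1/4) ρ_x` for all `x` and
`tr K = 1/2` is the guessing probability. -/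
theorem two_orthogonal_pairs_guessing_probability
    (ψ : Fin 4 → (Fin 2 → ℂ))
    (hunit : ∀ x, dotProduct (star (ψ x)) (ψ x) = 1)
    (horth13 : dotProduct (star (ψ 0)) (ψ 2) = 0)
    (horth24 : dotProduct (star (ψ 1)) (ψ 3) = 0) :
    IsGreatest {v : ℝ | ∃ M : Fin 4 → Matrix (Fin 2) (Fin 2) ℂ, IsPOVM M ∧
        v = ∑ x : Fin 4, (1 / 4 : ℝ) *
          ((M x * Matrix.vecMulVec (ψ x) (star (ψ x))).trace).re}
      (1 / 2) ∧
    (∀ x : Fin 4,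
      ((1 / 2 : ℂ) • (1 : Matrix (Fin 2) (Fin 2) ℂ)
        - (1 / 4 : ℂ) • Matrix.vecMulVec (ψ x) (star (ψ x))).PosSemidef) := by
  set ρ : Fin 4 → Matrix (Fin 2) (Fin 2) ℂ := fun x => Matrix.vecMulVec (ψ x) (star (ψ x)) with hρ
  -- partner function
  set p : Fin 4 → Fin 4 := ![2, 3, 0, 1] with hp
  have hpair : ∀ x : Fin 4, ρ x + ρ (p x) = 1 := by
    have h02 : ρ 0 + ρ 2 = 1 := complete _ _ (hunit 0) (hunit 2) horth13
    have h13 : ρ 1 + ρ 3 = 1 := complete _ _ (hunit 1) (hunit 3) horth24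
    intro x
    fin_cases x
    · exact h02
    · exact h13
    · show ρ 2 + ρ 0 = 1
      rw [add_comm]; exact h02
    · show ρ 3 + ρ 1 = 1
      rw [add_comm]; exact h13
  constructor
  · constructor
    · -- membership: the measurement (ρ 0, 0, ρ 2, 0)
      refine ⟨![ρ 0, 0, ρ 2, 0], ⟨?_, ?_⟩, ?_⟩
      · intro x
        fin_cases x
        · exact rho_psd _
        · exact Matrix.PosSemidef.zero
        · exact rho_psd _
        · exact Matrix.PosSemidef.zero
      · rw [Fin.sum_univ_four]
        simpa [hp] using hpair 0
      · have hmv : ∀ x : Fin 4, ρ x *ᵥ ψ x = ψ x := by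
          intro x
          funext i
          have := hunit x
          simp only [dotProduct, Pi.star_apply] at this
          simp only [hρ, Matrix.mulVec, dotProduct, Matrix.vecMulVec_apply,
            Pi.star_apply]
          calc ∑ j, ψ x i * star (ψ x j) * ψ x j
              = ψ x i * ∑ j, star (ψ x j) * ψ x j := by
                rw [Finset.mul_sum]; exact Finset.sum_congr rfl fun j _ => by ring
            _ = ψ x i := by rw [this, mul_one]
        have htr : ∀ x : Fin 4, ((ρ x * ρ x).trace).re = 1 := by
          intro x
          rw [hρ, trace_mul_vmv, ← hρ, hmv x, hunit x]
          norm_num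
        rw [Fin.sum_univ_four]
        simp only [Matrix.cons_val_zero, Matrix.cons_val_one, Matrix.head_cons,
          Matrix.zero_mul, Matrix.trace_zero, Complex.zero_re, mul_zero]
        rw [show (![ρ 0, 0, ρ 2, 0] : Fin 4 → Matrix (Fin 2) (Fin 2) ℂ) 2 = ρ 2 from rfl]
        rw [show (![ρ 0, 0, ρ 2, 0] : Fin 4 → Matrix (Fin 2) (Fin 2) ℂ) 3 = 0 from rfl, Matrix.zero_mul, Matrix.trace_zero, Complex.zero_re, mul_zero]
        rw [htr 0, htr 2]
        norm_num
    · -- upper bound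
      rintro v ⟨M, ⟨hMpsd, hMsum⟩, rfl⟩
      have key : ∀ x : Fin 4, ((M x * ρ x).trace).re ≤ ((M x).trace).re := by
        intro x
        have hsplit : (M x).trace = (M x * ρ x).trace + (M x * ρ (p x)).trace := by
          rw [← Matrix.trace_add, ← Matrix.mul_add, hpair x, Matrix.mul_one]
        have hnn : 0 ≤ ((M x * ρ (p x)).trace).re := by
          rw [hρ, trace_mul_vmv]
          have := (hMpsd x).dotProduct_mulVec_nonneg (ψ (p x))
          exact (Complex.le_def.mp this).1
        have := congrArg Complex.re hsplit
        rw [Complex.add_re] at this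
        linarith
      calc ∑ x : Fin 4, (1/4 : ℝ) * ((M x * ρ x).trace).re
          ≤ ∑ x : Fin 4, (1/4 : ℝ) * ((M x).trace).re := by
            apply Finset.sum_le_sum
            intro x _
            have := key x
            linarith
        _ = (1/4 : ℝ) * ((∑ x : Fin 4, M x).trace).re := by
            rw [Matrix.trace_sum, Complex.re_sum, Finset.mul_sum]
        _ = 1/2 := by
            rw [hMsum]
            norm_num [Matrix.trace_one]
  · -- symmetry operator
    intro x
    have heq : (1/2 : ℂ) • (1 : Matrix (Fin 2) (Fin 2) ℂ)
          - (1/4 : ℂ) • Matrix.vecMulVec (ψ x) (star (ψ x))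
        = (1/4 : ℂ) • (1 : Matrix (Fin 2) (Fin 2) ℂ) + (1/4 : ℂ) • ρ (p x) := by
      have h1 : (1 : Matrix (Fin 2) (Fin 2) ℂ) = ρ x + ρ (p x) := (hpair x).symm
      rw [show Matrix.vecMulVec (ψ x) (star (ψ x)) = ρ x from rfl]
      rw [show ((1:ℂ)/2) = (1/4 : ℂ) + (1/4 : ℂ) by norm_num, add_smul]
      nth_rewrite 2 [h1]
      rw [smul_add]
      abel
    rw [heq]
    exact (psd_smul_quarter Matrix.PosSemidef.one).add (psd_smul_quarter (rho_psd _))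
end
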